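/- For every n ∈ ℕ with n ≥ 1, every (ξ_j)_{1≤j≤n} ∈ ℝ^n, every (a_j)_{1≤j≤n} ∈ ℂ^n and every (γ_{j,k})_{1≤j<k≤n} ∈ ℝ^{n(n−1)/2}: U_n((ξ_j)_{1≤j≤n}) · M_n((a_j)_{1≤j≤n},(γ_{j,k})_{1≤j<k≤n}) · U_n((ξ_j)_{1≤j≤n})^* = M_n((e^{−iξ_j}·a_j)_{1≤j≤n},(γ_{j,k})_{1≤j<k≤n}), where ^* denotes the conjugate transpose. -/

import Mathlib

open Matrix

/-- The recursively defined unitary matrix `U_n((ξ_j))` (0-based indexing of `B_n = Fin (2^n)`). -/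
noncomputable def Umat : (n : ℕ) → (Fin n → ℝ) → Matrix (Fin (2 ^ n)) (Fin (2 ^ n)) ℂ
  | 0, _ => 1
  | n + 1, ξ =>
      (Matrix.reindex (finSumFinEquiv.trans (finCongr (by rw [pow_succ, mul_two])))
        (finSumFinEquiv.trans (finCongr (by rw [pow_succ, mul_two]))))
        (Matrix.fromBlocks (Umat n fun j => ξ j.castSucc) 0 0
          (Complex.exp (Complex.I * (ξ (Fin.last n) : ℂ)) • Umat n fun j => ξ j.castSucc))

/-- The recursively defined hopping matrix `M_n((a_j), (γ_{j,k}))`; only the entries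
`γ j k` with `j < k` are relevant. -/
noncomputable def Mmat : (n : ℕ) → (Fin n → ℂ) → (Fin n → Fin n → ℝ) →
    Matrix (Fin (2 ^ n)) (Fin (2 ^ n)) ℂ
  | 0, _, _ => 0
  | n + 1, a, γ =>
      (Matrix.reindex (finSumFinEquiv.trans (finCongr (by rw [pow_succ, mul_two])))
        (finSumFinEquiv.trans (finCongr (by rw [pow_succ, mul_two]))))
        (Matrix.fromBlocks
          (Mmat n (fun j => a j.castSucc) fun j k => γ j.castSucc k.castSucc)
          (a (Fin.last n) • Umat n fun j => γ j.castSucc (Fin.last n))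
          ((starRingEnd ℂ) (a (Fin.last n)) • (Umat n fun j => γ j.castSucc (Fin.last n))ᴴ)
          (Mmat n (fun j => a j.castSucc) fun j k => γ j.castSucc k.castSucc))

lemma phase_mul_conj (x : ℝ) :
    Complex.exp (Complex.I * x) * (starRingEnd ℂ) (Complex.exp (Complex.I * x)) = 1 := by
  rw [← Complex.exp_conj]
  simp only [_root_.map_mul, Complex.conj_I, Complex.conj_ofReal]
  rw [← Complex.exp_add]
  ring_nf
  exact Complex.exp_zero

lemma phase_conj_mul (x : ℝ) :
    (starRingEnd ℂ) (Complex.exp (Complex.I * x)) * Complex.exp (Complex.I * x) = 1 := by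
  rw [mul_comm]; exact phase_mul_conj x

lemma Umat_mul_conjTranspose (n : ℕ) (ξ : Fin n → ℝ) : Umat n ξ * (Umat n ξ)ᴴ = 1 := by
  induction n with
  | zero => simp [Umat]
  | succ n ih =>
    simp only [Umat, Matrix.reindex_apply, Matrix.conjTranspose_submatrix,
      Matrix.submatrix_mul_equiv, Matrix.fromBlocks_conjTranspose, Matrix.fromBlocks_multiply]
    simp [ih, Matrix.smul_mul, Matrix.mul_smul, smul_smul, phase_mul_conj, phase_conj_mul,
      ← Matrix.submatrix_one_equiv
        ((finSumFinEquiv.trans (finCongr (by rw [pow_succ, mul_two] : 2 ^ (n+1) = 2^n + 2^n))).symm),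
      Matrix.fromBlocks_one]
    exact Matrix.submatrix_one _ (finSumFinEquiv.symm.injective.comp (finCongr _).injective)

lemma Umat_comm (n : ℕ) (ξ η : Fin n → ℝ) :
    Umat n ξ * Umat n η = Umat n η * Umat n ξ := by
  induction n with
  | zero => simp [Umat]
  | succ n ih =>
    simp only [Umat, Matrix.reindex_apply, Matrix.submatrix_mul_equiv,
      Matrix.fromBlocks_multiply]
    simp only [Matrix.smul_mul, Matrix.mul_smul, smul_smul, ih]
    rw [mul_comm (Complex.exp (Complex.I * (η (Fin.last n) : ℂ)))]
    simp

lemma Umat_conj_Umat (n : ℕ) (ξ η : Fin n → ℝ) :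
    Umat n ξ * Umat n η * (Umat n ξ)ᴴ = Umat n η := by
  rw [Umat_comm, mul_assoc, Umat_mul_conjTranspose, mul_one]

lemma Umat_conj_UmatH (n : ℕ) (ξ η : Fin n → ℝ) :
    Umat n ξ * (Umat n η)ᴴ * (Umat n ξ)ᴴ = (Umat n η)ᴴ := by
  have := congrArg conjTranspose (Umat_conj_Umat n ξ η)
  simpa [Matrix.conjTranspose_mul, mul_assoc] using this

lemma aux (n : ℕ) (ξ : Fin n → ℝ) (a : Fin n → ℂ) (γ : Fin n → Fin n → ℝ) :
    Umat n ξ * Mmat n a γ * (Umat n ξ)ᴴ =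
      Mmat n (fun j => Complex.exp (-(Complex.I * (ξ j : ℂ))) * a j) γ := by
  induction n with
  | zero => simp [Umat, Mmat]
  | succ n ih =>
    simp only [Umat, Mmat, Matrix.reindex_apply, Matrix.conjTranspose_submatrix,
      Matrix.submatrix_mul_equiv, Matrix.fromBlocks_conjTranspose, Matrix.fromBlocks_multiply]
    simp only [Matrix.smul_mul, Matrix.mul_smul, smul_smul, Matrix.conjTranspose_smul,
      mul_zero, zero_mul, add_zero, zero_add, Matrix.mul_zero, Matrix.zero_mul, smul_zero]
    simp only [Matrix.conjTranspose_zero, Matrix.mul_zero, smul_zero, add_zero, zero_add,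
      ih, Umat_conj_Umat, Umat_conj_UmatH]
    have h1 : star (Complex.exp (Complex.I * (ξ (Fin.last n) : ℂ))) =
        Complex.exp (-(Complex.I * (ξ (Fin.last n) : ℂ))) := by
      rw [Complex.star_def, ← Complex.exp_conj]
      simp [Complex.conj_ofReal]
    have h2 : star (Complex.exp (Complex.I * (ξ (Fin.last n) : ℂ))) *
        Complex.exp (Complex.I * (ξ (Fin.last n) : ℂ)) = 1 := phase_conj_mul _
    rw [h2, one_smul, h1]
    simp only [_root_.map_mul]
    rw [← Complex.exp_conj]
    simp [Complex.conj_ofReal]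
    ring_nf

/-- Lemma 2.2 (2): conjugating `M_n` by `U_n` multiplies the hopping parameters by phases. -/
theorem Umat_Mmat_conj (n : ℕ) (hn : 1 ≤ n) (ξ : Fin n → ℝ) (a : Fin n → ℂ)
    (γ : Fin n → Fin n → ℝ) :
    Umat n ξ * Mmat n a γ * (Umat n ξ)ᴴ =
      Mmat n (fun j => Complex.exp (-(Complex.I * (ξ j : ℂ))) * a j) γ :=
  aux n ξ a γ
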